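/- Let 0 < p < 1/2. For every s > 2 the series Σ_{n=1}^∞ Σ_{w∈{1,2,3}ⁿ} φ^s(C_w) converges; consequently s₀ := inf{ s > 0 : Σ_{n=1}^∞ Σ_{w∈{1,2,3}ⁿ} φ^s(C_w) < ∞ } satisfies s₀ ≤ 2. -/

import Mathlib

open Matrix MeasureTheory Filter
open scoped ENNReal

set_option maxHeartbeats 2000000
set_option synthInstance.maxHeartbeats 1000000

noncomputable section

abbrev E3 : Type := EuclideanSpace ℝ (Fin 3)
abbrev Mat3 : Type := Matrix (Fin 3) (Fin 3) ℝ

/-- The action of a matrix on Euclidean 3-space. -/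
noncomputable def matApply (A : Mat3) (x : E3) : E3 := Matrix.toEuclideanCLM (𝕜 := ℝ) A x

/-- The largest singular value `α₁(A) = ‖A‖` (Euclidean operator norm). -/
noncomputable def sv1 (A : Mat3) : ℝ := ‖Matrix.toEuclideanCLM (𝕜 := ℝ) A‖

/-- The smallest singular value `α₃(A) = ‖A⁻¹‖⁻¹`. -/
noncomputable def sv3 (A : Mat3) : ℝ := (‖Matrix.toEuclideanCLM (𝕜 := ℝ) A⁻¹‖)⁻¹

/-- The middle singular value `α₂(A) = |det A| / (α₁(A) α₃(A))`. -/
noncomputable def sv2 (A : Mat3) : ℝ := |A.det| / (sv1 A * sv3 A)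

/-- Falconer's singular value function `φ^s(A)`. -/
noncomputable def svf (s : ℝ) (A : Mat3) : ℝ :=
  if s ≤ 1 then (sv1 A) ^ s
  else if s ≤ 2 then sv1 A * (sv2 A) ^ (s - 1)
  else if s ≤ 3 then sv1 A * sv2 A * (sv3 A) ^ (s - 2)
  else (sv1 A * sv2 A * sv3 A) ^ (s / 3)

/-- The three matrices `C₁, C₂, C₃` (with 0-based indexing). -/
def Cmat (p : ℝ) : Fin 3 → Mat3 :=
  ![!![1 - 2*p, -p, -p; 0, p, 0; 0, 0, p],
    !![p, 0, 0; -p, 1 - 2*p, -p; 0, 0, p],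
    !![p, 0, 0; 0, p, 0; -p, -p, 1 - 2*p]]

/-- The product `C_w = C_{j₁} ⋯ C_{jₙ}` along a word `w = (j₁, …, jₙ)`. -/
noncomputable def Cword (p : ℝ) {n : ℕ} (w : Fin n → Fin 3) : Mat3 :=
  ((List.ofFn w).map (Cmat p)).prod

/-- standard basis vectors of `E3` -/
noncomputable def eVec (i : Fin 3) : E3 := EuclideanSpace.single i 1

/-- The affine map `G_i(x) = C_i x + 2p·e_i`. -/
noncomputable def Gmap (p : ℝ) (i : Fin 3) (x : E3) : E3 :=
  matApply (Cmat p i) x + (2 * p) • eVec i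

/-- The composition `G_w = G_{j₁} ∘ ⋯ ∘ G_{jₙ}` along a word `w = (j₁, …, jₙ)`. -/
noncomputable def Gword (p : ℝ) {n : ℕ} (w : Fin n → Fin 3) : E3 → E3 :=
  ((List.ofFn w).map (Gmap p)).foldr (· ∘ ·) id

/-- Summability of the double series `Σ_{n=1}^∞ Σ_{w ∈ {1,2,3}ⁿ} φ^s(C_w)`
(all terms are nonnegative, so summability is equivalent to finiteness of the sum). -/
def seriesSummable (p s : ℝ) : Prop :=
  Summable (fun x : Σ n : ℕ, (Fin (n+1) → Fin 3) => svf s (Cword p x.2))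

/-- The affinity dimension `s₀ = inf{s > 0 : Σ_n Σ_w φ^s(C_w) < ∞}`. -/
noncomputable def s0 (p : ℝ) : ℝ := sInf {s : ℝ | 0 < s ∧ seriesSummable p s}

/-- The minimal number of balls of radius `δ` needed to cover `A`. -/
noncomputable def coverNum (A : Set E3) (δ : ℝ) : ℕ :=
  sInf {n : ℕ | ∃ t : Finset E3, t.card = n ∧ A ⊆ ⋃ x ∈ t, Metric.ball x δ}

/-- The upper box-counting dimension `limsup_{δ→0⁺} log N_δ(A) / (−log δ)`. -/
noncomputable def upperBoxDim (A : Set E3) : ℝ :=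
  Filter.limsup (fun δ : ℝ => Real.log (coverNum A δ) / (-Real.log δ))
    (nhdsWithin 0 (Set.Ioi 0))

/-- The vector `(1,1,1)`. -/
noncomputable def onesVec : E3 := (WithLp.equiv 2 (Fin 3 → ℝ)).symm ![1, 1, 1]

/-- Orthogonal projection of `ℝ³` onto the plane `V = {x : x₁ + x₂ + x₃ = 0}`. -/
noncomputable def projV (x : E3) : E3 := x - (((x 0) + (x 1) + (x 2)) / 3) • onesVec

/-- The vector `(a,b,c)` in `E3`. -/
noncomputable def vec3 (a b c : ℝ) : E3 := (WithLp.equiv 2 (Fin 3 → ℝ)).symm ![a, b, c]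

/-- The triangle `T₀ = conv{e₁, e₂, e₃}`. -/
noncomputable def T0set : Set E3 := convexHull ℝ {eVec 0, eVec 1, eVec 2}

/-- The standard tetrahedron `W = conv{0, e₁, e₂, e₃}`. -/
noncomputable def Wset : Set E3 := convexHull ℝ {0, eVec 0, eVec 1, eVec 2}

/-- The triangle `T_ε = conv{(1−2ε,ε,ε), (ε,1−2ε,ε), (ε,ε,1−2ε)}`. -/
noncomputable def Ttri (ε : ℝ) : Set E3 :=
  convexHull ℝ {vec3 (1 - 2*ε) ε ε, vec3 ε (1 - 2*ε) ε, vec3 ε ε (1 - 2*ε)}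


namespace SvfAux

open RealInnerProductSpace

/-- The inverses of the matrices `C₁, C₂, C₃`. -/
def Dmat (p : ℝ) : Fin 3 → Mat3 :=
  ![!![1/(1-2*p), 1/(1-2*p), 1/(1-2*p); 0, 1/p, 0; 0, 0, 1/p],
    !![1/p, 0, 0; 1/(1-2*p), 1/(1-2*p), 1/(1-2*p); 0, 0, 1/p],
    !![1/p, 0, 0; 0, 1/p, 0; 1/(1-2*p), 1/(1-2*p), 1/(1-2*p)]]

def wvec (p : ℝ) (i : Fin 3) : Fin 3 → ℝ :=
  fun j => if j = i then 1/(1-2*p) - 1/p else 1/(1-2*p)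

def Qc (p : ℝ) : ℝ := max (1/(1-2*p)) |1/(1-2*p) - 1/p|
def Rc (p : ℝ) : ℝ := 1/p + Qc p

def Nrm (A : Mat3) : ℝ := ‖Matrix.toEuclideanCLM (𝕜 := ℝ) A‖
def nE (v : Fin 3 → ℝ) : ℝ := ‖(WithLp.equiv 2 (Fin 3 → ℝ)).symm v‖

variable {p : ℝ}

lemma Cmat_mul_Dmat (hp0 : 0 < p) (hp1 : p < 1/2) (i : Fin 3) :
    Cmat p i * Dmat p i = 1 := by
  have ha : (1 - 2*p) ≠ 0 := by linarith
  have hp : p ≠ 0 := ne_of_gt hp0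
  have ha' : (1 - p*2) ≠ 0 := by linarith
  fin_cases i <;> ext i j <;> fin_cases i <;> fin_cases j <;>
    simp [Cmat, Dmat, Matrix.mul_apply, Fin.sum_univ_three, Matrix.one_apply,
      Matrix.vecHead, Matrix.vecTail] <;>
    field_simp <;> try ring
  all_goals (field_simp; ring)

lemma Dmat_decomp (i : Fin 3) :
    Dmat p i = (1/p) • (1 : Mat3) + vecMulVec (Pi.single i 1) (wvec p i) := by
  fin_cases i <;> ext i j <;> fin_cases i <;> fin_cases j <;>
    simp [Dmat, wvec, vecMulVec_apply, Matrix.one_apply, Pi.single_apply,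
      Matrix.vecHead, Matrix.vecTail] <;> try ring

lemma det_Cmat (i : Fin 3) : (Cmat p i).det = (1 - 2*p) * p^2 := by
  fin_cases i <;>
    simp [Cmat, Matrix.det_fin_three, Matrix.vecHead, Matrix.vecTail] <;> ring

lemma vmv_mul_vmv (a b c d : Fin 3 → ℝ) :
    vecMulVec a b * vecMulVec c d = (b ⬝ᵥ c) • vecMulVec a d := by
  ext i j
  simp [vecMulVec_apply, Matrix.mul_apply, dotProduct, Fin.sum_univ_three,
    Matrix.smul_apply, smul_eq_mul]
  ring

lemma vmv_add (a b c : Fin 3 → ℝ) :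
    vecMulVec a (b + c) = vecMulVec a b + vecMulVec a c := by
  ext i j; simp [vecMulVec_apply]; ring

lemma vmv_smul (a : Fin 3 → ℝ) (r : ℝ) (b : Fin 3 → ℝ) :
    vecMulVec a (r • b) = r • vecMulVec a b := by
  ext i j; simp [vecMulVec_apply, smul_eq_mul]; ring

lemma vmv_zero (a : Fin 3 → ℝ) : vecMulVec a (0 : Fin 3 → ℝ) = 0 := by
  ext i j; simp [vecMulVec_apply]

lemma Nrm_nonneg (A : Mat3) : 0 ≤ Nrm A := norm_nonneg _
lemma nE_nonneg (v : Fin 3 → ℝ) : 0 ≤ nE v := norm_nonneg _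

lemma Nrm_one : Nrm 1 = 1 := by
  unfold Nrm; rw [_root_.map_one]; exact ContinuousLinearMap.norm_id

lemma Nrm_smul (c : ℝ) (A : Mat3) : Nrm (c • A) = |c| * Nrm A := by
  unfold Nrm
  rw [_root_.map_smul]
  rw [norm_smul c (Matrix.toEuclideanCLM (𝕜 := ℝ) A), Real.norm_eq_abs]

lemma Nrm_add_le (A B : Mat3) : Nrm (A + B) ≤ Nrm A + Nrm B := by
  unfold Nrm; rw [_root_.map_add]; exact norm_add_le _ _

lemma Nrm_eq_zero_iff {A : Mat3} : Nrm A = 0 ↔ A = 0 := by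
  unfold Nrm
  rw [norm_eq_zero]
  constructor
  · intro h
    have := congrArg (Matrix.toEuclideanCLM (𝕜 := ℝ)).symm h
    simpa using this
  · rintro rfl; exact map_zero _

lemma Nrm_pos {A : Mat3} (hA : A ≠ 0) : 0 < Nrm A :=
  lt_of_le_of_ne (Nrm_nonneg A) (fun h => hA (Nrm_eq_zero_iff.mp h.symm))

lemma nE_zero : nE (0 : Fin 3 → ℝ) = 0 := by
  unfold nE
  have : (WithLp.equiv 2 (Fin 3 → ℝ)).symm 0 = 0 := rfl
  rw [this, norm_zero]

lemma nE_add_le (v w : Fin 3 → ℝ) : nE (v + w) ≤ nE v + nE w := by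
  unfold nE
  rw [WithLp.equiv_symm_apply, WithLp.toLp_add]
  exact norm_add_le _ _

lemma nE_smul (r : ℝ) (v : Fin 3 → ℝ) : nE (r • v) = |r| * nE v := by
  unfold nE
  rw [WithLp.equiv_symm_apply, WithLp.toLp_smul, norm_smul, Real.norm_eq_abs]

lemma nE_single (i : Fin 3) : nE (Pi.single i 1) = 1 := by
  unfold nE
  rw [WithLp.equiv_symm_apply, PiLp.norm_toLp_single]
  simp [EuclideanSpace.norm_single]

lemma dot_le (b v : Fin 3 → ℝ) : |b ⬝ᵥ v| ≤ nE b * nE v := by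
  have h := abs_real_inner_le_norm ((WithLp.equiv 2 (Fin 3 → ℝ)).symm b)
    ((WithLp.equiv 2 (Fin 3 → ℝ)).symm v)
  have h2 : (inner ℝ ((WithLp.equiv 2 (Fin 3 → ℝ)).symm b)
      ((WithLp.equiv 2 (Fin 3 → ℝ)).symm v) : ℝ) = b ⬝ᵥ v := by
    simp [PiLp.inner_apply, dotProduct, RCLike.inner_apply, mul_comm]
  rw [h2] at h
  exact h

lemma Nrm_vecMulVec (a b : Fin 3 → ℝ) : Nrm (vecMulVec a b) ≤ nE a * nE b := by
  unfold Nrm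
  apply ContinuousLinearMap.opNorm_le_bound
  · exact mul_nonneg (nE_nonneg a) (nE_nonneg b)
  intro z
  have hmv : (vecMulVec a b).mulVec ((WithLp.equiv 2 (Fin 3 → ℝ)) z)
      = (b ⬝ᵥ (WithLp.equiv 2 (Fin 3 → ℝ)) z) • a := by
    ext i
    simp [vecMulVec_apply, Matrix.mulVec, dotProduct, Fin.sum_univ_three, smul_eq_mul]
    ring
  have hz : z = (WithLp.equiv 2 (Fin 3 → ℝ)).symm ((WithLp.equiv 2 (Fin 3 → ℝ)) z) := rfl
  rw [hz, WithLp.equiv_symm_apply, Matrix.toEuclideanCLM_toLp]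
  rw [hmv, WithLp.toLp_smul]
  rw [norm_smul, Real.norm_eq_abs]
  calc |b ⬝ᵥ (WithLp.equiv 2 (Fin 3 → ℝ)) z| * ‖(WithLp.equiv 2 (Fin 3 → ℝ)).symm a‖
      ≤ (nE b * nE ((WithLp.equiv 2 (Fin 3 → ℝ)) z)) * nE a := by
        apply mul_le_mul_of_nonneg_right (dot_le b _) (norm_nonneg _)
    _ = nE a * nE b * ‖z‖ := by rw [show nE ((WithLp.equiv 2 (Fin 3 → ℝ)) z) = ‖z‖ from rfl]; ring

lemma nE_le_of_abs_le {v : Fin 3 → ℝ} {c : ℝ} (h : ∀ j, |v j| ≤ c) :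
    nE v ≤ Real.sqrt 3 * c := by
  have hc : 0 ≤ c := le_trans (abs_nonneg _) (h 0)
  unfold nE
  rw [EuclideanSpace.norm_eq]
  have : ∑ i : Fin 3, ‖(WithLp.equiv 2 (Fin 3 → ℝ)).symm v i‖ ^ 2 ≤ 3 * c^2 := by
    have hv : ∀ i : Fin 3, ‖(WithLp.equiv 2 (Fin 3 → ℝ)).symm v i‖ ^2 ≤ c^2 := by
      intro i
      rw [Real.norm_eq_abs, ← sq_abs c]
      have : |v i| ≤ |c| := le_trans (h i) (le_abs_self c)
      exact pow_le_pow_left₀ (abs_nonneg _) this 2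
    calc ∑ i : Fin 3, ‖(WithLp.equiv 2 (Fin 3 → ℝ)).symm v i‖ ^ 2
        ≤ ∑ _i : Fin 3, c^2 := Finset.sum_le_sum (fun i _ => hv i)
      _ = 3 * c^2 := by simp [Fin.sum_univ_three]; try ring
  calc Real.sqrt (∑ i : Fin 3, ‖(WithLp.equiv 2 (Fin 3 → ℝ)).symm v i‖ ^ 2)
      ≤ Real.sqrt (3 * c^2) := Real.sqrt_le_sqrt this
    _ = Real.sqrt 3 * c := by
        rw [Real.sqrt_mul (by norm_num : (0:ℝ) ≤ 3), Real.sqrt_sq hc]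

lemma Qc_nonneg (hp0 : 0 < p) (hp1 : p < 1/2) : 0 ≤ Qc p :=
  le_trans (abs_nonneg _) (le_max_right _ _)

lemma Rc_nonneg (hp0 : 0 < p) (hp1 : p < 1/2) : 0 ≤ Rc p := by
  have h1 : 0 ≤ 1/p := by positivity
  have h2 := Qc_nonneg hp0 hp1
  unfold Rc
  linarith

lemma inv_p_le_Rc (hp0 : 0 < p) (hp1 : p < 1/2) : 1/p ≤ Rc p := by
  have := Qc_nonneg hp0 hp1; unfold Rc; linarith

lemma Qc_le_Rc (hp0 : 0 < p) (hp1 : p < 1/2) : Qc p ≤ Rc p := by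
  have : 0 ≤ 1/p := by positivity
  unfold Rc; linarith

lemma wvec_abs_le (hp0 : 0 < p) (hp1 : p < 1/2) (i j : Fin 3) :
    |wvec p i j| ≤ Qc p := by
  have ha : 0 < 1 - 2*p := by linarith
  unfold wvec Qc
  by_cases h : j = i
  · simp only [h, if_pos rfl]
    exact le_max_right _ _
  · rw [if_neg h, abs_of_nonneg (by positivity)]
    exact le_max_left _ _

lemma nE_wvec_le (hp0 : 0 < p) (hp1 : p < 1/2) (i : Fin 3) :
    nE (wvec p i) ≤ Real.sqrt 3 * Qc p :=
  nE_le_of_abs_le (wvec_abs_le hp0 hp1 i)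

lemma nE_sum3_le (v : Fin 3 → (Fin 3 → ℝ)) :
    nE (∑ k : Fin 3, v k) ≤ ∑ k : Fin 3, nE (v k) := by
  rw [Fin.sum_univ_three, Fin.sum_univ_three]
  calc nE (v 0 + v 1 + v 2) ≤ nE (v 0 + v 1) + nE (v 2) := nE_add_le _ _
    _ ≤ nE (v 0) + nE (v 1) + nE (v 2) := by
        have := nE_add_le (v 0) (v 1); linarith

lemma dot_single (b : Fin 3 → ℝ) (k : Fin 3) : b ⬝ᵥ Pi.single k 1 = b k := by
  simp

lemma vmv_sum3 (a : Fin 3 → ℝ) (v : Fin 3 → (Fin 3 → ℝ)) :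
    vecMulVec a (∑ k : Fin 3, v k) = ∑ k : Fin 3, vecMulVec a (v k) := by
  rw [Fin.sum_univ_three, Fin.sum_univ_three, vmv_add, vmv_add]

lemma step_eq (p : ℝ) (z : Fin 3 → Fin 3 → ℝ) (n : ℕ) (j : Fin 3) :
    ((1/p) • (1 : Mat3) + vecMulVec (Pi.single j 1) (wvec p j))
      * ((1/p)^n • (1 : Mat3) + ∑ i : Fin 3, vecMulVec (Pi.single i 1) (z i))
    = (1/p)^(n+1) • (1 : Mat3) + ∑ i : Fin 3, vecMulVec (Pi.single i 1)
        ((1/p) • z i + (if i = j then ((1/p)^n • wvec p j + ∑ k : Fin 3, (wvec p j k) • z k) else 0)) := by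
  have hite : ∑ i : Fin 3, vecMulVec (Pi.single i 1)
      ((1/p) • z i + (if i = j then ((1/p)^n • wvec p j + ∑ k : Fin 3, (wvec p j k) • z k) else 0))
      = (1/p) • (∑ i : Fin 3, vecMulVec (Pi.single i 1) (z i))
        + vecMulVec (Pi.single j 1) ((1/p)^n • wvec p j + ∑ k : Fin 3, (wvec p j k) • z k) := by
    simp only [vmv_add, vmv_smul]
    rw [Finset.sum_add_distrib, Finset.smul_sum]
    congr 1
    have h : ∀ i ∈ Finset.univ, vecMulVec (Pi.single i 1)
        (if i = j then ((1/p)^n • wvec p j + ∑ k : Fin 3, (wvec p j k) • z k) else 0)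
        = if i = j then vecMulVec (Pi.single j 1)
            ((1/p)^n • wvec p j + ∑ k : Fin 3, (wvec p j k) • z k) else 0 := by
      intro i _
      by_cases h : i = j
      · subst h; simp
      · simp [h, vmv_zero]
    rw [Finset.sum_congr rfl h, Finset.sum_ite_eq' Finset.univ j]
    rw [if_pos (Finset.mem_univ j), vmv_add, vmv_smul]
  rw [hite]
  simp only [add_mul, mul_add, Finset.mul_sum, vmv_mul_vmv, dot_single,
    smul_mul_assoc, mul_smul_comm, one_mul, mul_one, smul_smul, pow_succ,
    vmv_add, vmv_smul, vmv_sum3, Finset.sum_add_distrib, ← Finset.smul_sum]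
  module

lemma prod_decomp (hp0 : 0 < p) (hp1 : p < 1/2) (l : List (Fin 3)) :
    ∃ z : Fin 3 → (Fin 3 → ℝ),
      (l.map (Dmat p)).prod
        = (1/p)^l.length • (1 : Mat3) + ∑ i : Fin 3, vecMulVec (Pi.single i 1) (z i)
      ∧ ∑ i : Fin 3, nE (z i) ≤ Real.sqrt 3 * l.length * (Rc p)^l.length := by
  induction l with
  | nil =>
    refine ⟨fun _ => 0, ?_, ?_⟩
    · simp [vmv_zero]
    · simp [nE_zero]
  | cons j l ih =>
    obtain ⟨z, hz, hS⟩ := ih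
    set n := l.length with hn
    set c : ℝ := (1/p)^n with hc
    set X : Fin 3 → ℝ := c • wvec p j + ∑ k : Fin 3, (wvec p j k) • z k with hX
    refine ⟨fun i => (1/p) • z i + (if i = j then X else 0), ?_, ?_⟩
    · rw [List.map_cons, List.prod_cons, hz, List.length_cons]
      rw [Dmat_decomp j]
      exact step_eq p z n j
    · rw [List.length_cons]
      have hQ := Qc_nonneg hp0 hp1
      have hR := Rc_nonneg hp0 hp1
      have hXb : nE X ≤ c * (Real.sqrt 3 * Qc p) + Qc p * (∑ k : Fin 3, nE (z k)) := by
        calc nE X ≤ nE (c • wvec p j) + nE (∑ k : Fin 3, (wvec p j k) • z k) := nE_add_le _ _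
          _ ≤ c * (Real.sqrt 3 * Qc p) + Qc p * (∑ k : Fin 3, nE (z k)) := by
            have h1 : nE (c • wvec p j) ≤ c * (Real.sqrt 3 * Qc p) := by
              rw [nE_smul]
              have hcnn : 0 ≤ c := by positivity
              rw [abs_of_nonneg hcnn]
              exact mul_le_mul_of_nonneg_left (nE_wvec_le hp0 hp1 j) hcnn
            have h2 : nE (∑ k : Fin 3, (wvec p j k) • z k) ≤ Qc p * (∑ k : Fin 3, nE (z k)) := by
              calc nE (∑ k : Fin 3, (wvec p j k) • z k)
                  ≤ ∑ k : Fin 3, nE ((wvec p j k) • z k) := nE_sum3_le _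
                _ ≤ ∑ k : Fin 3, Qc p * nE (z k) := by
                    apply Finset.sum_le_sum
                    intro k _
                    rw [nE_smul]
                    exact mul_le_mul_of_nonneg_right (wvec_abs_le hp0 hp1 j k) (nE_nonneg _)
                _ = Qc p * (∑ k : Fin 3, nE (z k)) := by rw [Finset.mul_sum]
            linarith
      have hsum : ∑ i : Fin 3, nE ((1/p) • z i + (if i = j then X else 0))
          ≤ (1/p) * (∑ i : Fin 3, nE (z i)) + nE X := by
        calc ∑ i : Fin 3, nE ((1/p) • z i + (if i = j then X else 0))
            ≤ ∑ i : Fin 3, ((1/p) * nE (z i) + (if i = j then nE X else 0)) := by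
              apply Finset.sum_le_sum
              intro i _
              calc nE ((1/p) • z i + (if i = j then X else 0))
                  ≤ nE ((1/p) • z i) + nE (if i = j then X else 0) := nE_add_le _ _
                _ ≤ (1/p) * nE (z i) + (if i = j then nE X else 0) := by
                    rw [nE_smul, abs_of_nonneg (by positivity : (0:ℝ) ≤ 1/p)]
                    by_cases h : i = j
                    · simp [h]
                    · simp [h, nE_zero]
          _ = (1/p) * (∑ i : Fin 3, nE (z i)) + nE X := by
              rw [Finset.sum_add_distrib, Finset.sum_ite_eq' Finset.univ j (fun _ => nE X),
                if_pos (Finset.mem_univ j), Finset.mul_sum]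
      have hcR : c ≤ (Rc p)^n := pow_le_pow_left₀ (by positivity) (inv_p_le_Rc hp0 hp1) n
      have hsqrt : (0:ℝ) ≤ Real.sqrt 3 := Real.sqrt_nonneg 3
      have hSnn : 0 ≤ ∑ i : Fin 3, nE (z i) :=
        Finset.sum_nonneg (fun i _ => nE_nonneg _)
      calc ∑ i : Fin 3, nE ((1/p) • z i + (if i = j then X else 0))
          ≤ (1/p) * (∑ i : Fin 3, nE (z i)) + nE X := hsum
        _ ≤ (1/p) * (∑ i : Fin 3, nE (z i))
            + (c * (Real.sqrt 3 * Qc p) + Qc p * (∑ i : Fin 3, nE (z i))) := by linarith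
        _ = Rc p * (∑ i : Fin 3, nE (z i)) + c * (Real.sqrt 3 * Qc p) := by
            unfold Rc; ring
        _ ≤ Rc p * (Real.sqrt 3 * n * (Rc p)^n) + (Rc p)^n * (Real.sqrt 3 * Rc p) := by
            have h1 : Rc p * (∑ i : Fin 3, nE (z i)) ≤ Rc p * (Real.sqrt 3 * n * (Rc p)^n) :=
              mul_le_mul_of_nonneg_left hS hR
            have h2 : c * (Real.sqrt 3 * Qc p) ≤ (Rc p)^n * (Real.sqrt 3 * Rc p) := by
              apply mul_le_mul hcR _ (by positivity) (by positivity)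
              exact mul_le_mul_of_nonneg_left (Qc_le_Rc hp0 hp1) hsqrt
            linarith
        _ ≤ Real.sqrt 3 * ((l.length + 1 : ℕ) : ℝ) * (Rc p)^(l.length + 1) := by
            push_cast
            rw [pow_succ]
            ring_nf
            nlinarith [pow_nonneg hR n, hsqrt, hR]

lemma Nrm_Dprod_le (hp0 : 0 < p) (hp1 : p < 1/2) (l : List (Fin 3)) (hl : 1 ≤ l.length) :
    Nrm ((l.map (Dmat p)).prod) ≤ 3 * l.length * (Rc p)^l.length := by
  obtain ⟨z, hdec, hS⟩ := prod_decomp hp0 hp1 l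
  rw [hdec]
  have hR := Rc_nonneg hp0 hp1
  have hRn : (0:ℝ) ≤ (Rc p)^l.length := pow_nonneg hR _
  have h1 : Nrm ((1/p)^l.length • (1 : Mat3)) = (1/p)^l.length := by
    rw [Nrm_smul, Nrm_one, abs_of_nonneg (by positivity : (0:ℝ) ≤ (1/p)^l.length), mul_one]
  have h2 : Nrm (∑ i : Fin 3, vecMulVec (Pi.single i 1) (z i)) ≤ ∑ i : Fin 3, nE (z i) := by
    rw [Fin.sum_univ_three, Fin.sum_univ_three]
    have b0 := Nrm_vecMulVec (Pi.single (0:Fin 3) 1) (z 0)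
    have b1 := Nrm_vecMulVec (Pi.single (1:Fin 3) 1) (z 1)
    have b2 := Nrm_vecMulVec (Pi.single (2:Fin 3) 1) (z 2)
    rw [nE_single, one_mul] at b0 b1 b2
    calc Nrm (vecMulVec (Pi.single 0 1) (z 0) + vecMulVec (Pi.single 1 1) (z 1)
          + vecMulVec (Pi.single 2 1) (z 2))
        ≤ Nrm (vecMulVec (Pi.single 0 1) (z 0) + vecMulVec (Pi.single 1 1) (z 1))
          + Nrm (vecMulVec (Pi.single 2 1) (z 2)) := Nrm_add_le _ _
      _ ≤ nE (z 0) + nE (z 1) + nE (z 2) := by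
          have := Nrm_add_le (vecMulVec (Pi.single (0:Fin 3) 1) (z 0))
            (vecMulVec (Pi.single (1:Fin 3) 1) (z 1))
          linarith
  have hc : ((1:ℝ)/p)^l.length ≤ (Rc p)^l.length :=
    pow_le_pow_left₀ (by positivity) (inv_p_le_Rc hp0 hp1) _
  have hsqrt3 : Real.sqrt 3 ≤ 2 := by
    nlinarith [Real.sq_sqrt (by norm_num : (0:ℝ) ≤ 3), Real.sqrt_nonneg 3]
  have hm1 : (1:ℝ) ≤ (l.length : ℝ) := by exact_mod_cast hl
  calc Nrm ((1/p)^l.length • (1 : Mat3) + ∑ i : Fin 3, vecMulVec (Pi.single i 1) (z i))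
      ≤ Nrm ((1/p)^l.length • (1 : Mat3))
        + Nrm (∑ i : Fin 3, vecMulVec (Pi.single i 1) (z i)) := Nrm_add_le _ _
    _ ≤ (1/p)^l.length + Real.sqrt 3 * l.length * (Rc p)^l.length := by
        rw [h1]; linarith
    _ ≤ 3 * l.length * (Rc p)^l.length := by
        have hthis : ((1:ℝ)/p)^l.length ≤ (l.length : ℝ) * (Rc p)^l.length := by
          calc ((1:ℝ)/p)^l.length ≤ (Rc p)^l.length := hc
            _ ≤ (l.length : ℝ) * (Rc p)^l.length := le_mul_of_one_le_left hRn hm1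
        have hLR : (0:ℝ) ≤ (l.length : ℝ) * (Rc p)^l.length :=
          mul_nonneg (by positivity) hRn
        nlinarith [hsqrt3, hLR, hthis]

lemma Cprod_mul_Dprod (hp0 : 0 < p) (hp1 : p < 1/2) (l : List (Fin 3)) :
    (l.map (Cmat p)).prod * ((l.reverse.map (Dmat p)).prod) = 1 := by
  induction l with
  | nil => simp
  | cons j l ih =>
    rw [List.map_cons, List.prod_cons, List.reverse_cons, List.map_append,
      List.prod_append, List.map_singleton, List.prod_singleton]
    calc Cmat p j * (l.map (Cmat p)).prod * ((l.reverse.map (Dmat p)).prod * Dmat p j)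
        = Cmat p j * ((l.map (Cmat p)).prod * (l.reverse.map (Dmat p)).prod) * Dmat p j := by
          noncomm_ring
      _ = Cmat p j * Dmat p j := by rw [ih, mul_one]
      _ = 1 := Cmat_mul_Dmat hp0 hp1 j

lemma det_Cprod (l : List (Fin 3)) :
    ((l.map (Cmat p)).prod).det = ((1 - 2*p) * p^2)^l.length := by
  induction l with
  | nil => simp
  | cons j l ih =>
    rw [List.map_cons, List.prod_cons, Matrix.det_mul, ih, det_Cmat, List.length_cons,
      pow_succ]
    ring

lemma inv_Cprod (hp0 : 0 < p) (hp1 : p < 1/2) (l : List (Fin 3)) :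
    ((l.map (Cmat p)).prod)⁻¹ = (l.reverse.map (Dmat p)).prod :=
  Matrix.inv_eq_right_inv (Cprod_mul_Dprod hp0 hp1 l)

lemma d_pos (hp0 : 0 < p) (hp1 : p < 1/2) : 0 < (1 - 2*p) * p^2 :=
  mul_pos (by linarith) (pow_pos hp0 2)

lemma d_le (hp0 : 0 < p) (hp1 : p < 1/2) : (1 - 2*p) * p^2 ≤ 1/27 := by
  nlinarith [mul_nonneg (sq_nonneg (3*p - 1)) (by linarith : (0:ℝ) ≤ 1 + 6*p)]

lemma dR_le (hp0 : 0 < p) (hp1 : p < 1/2) : ((1 - 2*p) * p^2) * Rc p ≤ 1/4 := by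
  have ha : 0 < 1 - 2*p := by linarith
  have hd := d_pos hp0 hp1
  unfold Rc Qc
  rcases max_cases (1/(1-2*p)) |1/(1-2*p) - 1/p| with ⟨hm, _⟩ | ⟨hm, _⟩
  · rw [hm]
    have e1 : (1-2*p)*p^2 * (1/p + 1/(1-2*p)) = p - p^2 := by field_simp; ring
    rw [e1]; nlinarith [sq_nonneg (p - 1/2)]
  · rw [hm]
    have eabs : 1/(1-2*p) - 1/p = (3*p-1)/((1-2*p)*p) := by field_simp; ring
    rw [eabs, abs_div, abs_of_pos (by positivity : (0:ℝ) < (1-2*p)*p)]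
    rcases abs_cases (3*p-1) with ⟨h1, _⟩ | ⟨h1, _⟩
    · rw [h1]
      have e2 : (1-2*p)*p^2 * (1/p + (3*p-1)/((1-2*p)*p)) = p^2 := by field_simp; ring
      rw [e2]; nlinarith
    · rw [h1]
      have e2 : (1-2*p)*p^2 * (1/p + -(3*p-1)/((1-2*p)*p)) = 2*p - 5*p^2 := by
        field_simp; ring
      rw [e2]; nlinarith [sq_nonneg (p - 1/5)]

lemma word_bound (hp0 : 0 < p) (hp1 : p < 1/2) {s : ℝ} (hs : 2 < s)
    {m : ℕ} (hm : 1 ≤ m) (w : Fin m → Fin 3) :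
    svf s (Cword p w) ≤ 3 * m * ((1:ℝ)/4)^m := by
  have hdpos := d_pos hp0 hp1
  have hd1 := d_le hp0 hp1
  have hR0 := Rc_nonneg hp0 hp1
  have hlen : (List.ofFn w).length = m := List.length_ofFn
  have hCw : Cword p w = ((List.ofFn w).map (Cmat p)).prod := rfl
  have hdet : (Cword p w).det = ((1 - 2*p) * p^2)^m := by
    rw [hCw, det_Cprod, hlen]
  have hAne : Cword p w ≠ 0 := by
    intro h
    rw [h] at hdet
    rw [Matrix.det_zero] at hdet
    exact absurd hdet.symm (ne_of_gt (pow_pos hdpos m))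
  have hmul : Cword p w * (Cword p w)⁻¹ = 1 := by
    rw [hCw, inv_Cprod hp0 hp1]
    exact Cprod_mul_Dprod hp0 hp1 _
  have hAine : (Cword p w)⁻¹ ≠ 0 := by
    intro h
    rw [h, mul_zero] at hmul
    exact one_ne_zero hmul.symm
  have hNinvpos : 0 < Nrm (Cword p w)⁻¹ := Nrm_pos hAine
  have hN1pos : 0 < Nrm (Cword p w) := Nrm_pos hAne
  have hNinvle : Nrm (Cword p w)⁻¹ ≤ 3 * m * (Rc p)^m := by
    rw [hCw, inv_Cprod hp0 hp1]
    have := Nrm_Dprod_le hp0 hp1 (List.ofFn w).reverse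
      (by rw [List.length_reverse, hlen]; exact hm)
    rwa [List.length_reverse, hlen] at this
  have hsv1 : sv1 (Cword p w) = Nrm (Cword p w) := rfl
  have hsv3 : sv3 (Cword p w) = (Nrm (Cword p w)⁻¹)⁻¹ := rfl
  have hsv1pos : 0 < sv1 (Cword p w) := hN1pos
  have hsv3pos : 0 < sv3 (Cword p w) := by rw [hsv3]; exact inv_pos.mpr hNinvpos
  have habsdet : |(Cword p w).det| = ((1 - 2*p) * p^2)^m := by
    rw [hdet, abs_of_pos (pow_pos hdpos m)]
  have hm1 : (1:ℝ) ≤ (m:ℝ) := by exact_mod_cast hm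
  by_cases hs3 : s ≤ 3
  · have heval : svf s (Cword p w) = |(Cword p w).det| * (Nrm (Cword p w)⁻¹)^(3-s) := by
      unfold svf
      rw [if_neg (by linarith), if_neg (by linarith), if_pos hs3]
      have key : sv1 (Cword p w) * sv2 (Cword p w) * (sv3 (Cword p w))^(s-2)
          = |(Cword p w).det| * (sv3 (Cword p w))^(s-3) := by
        unfold sv2
        rw [show s-2 = (s-3)+1 by ring, Real.rpow_add hsv3pos, Real.rpow_one]
        field_simp
      rw [key, hsv3, Real.inv_rpow hNinvpos.le, ← Real.rpow_neg hNinvpos.le,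
        show -(s-3) = 3-s by ring]
    rw [heval, habsdet]
    have h3s : (0:ℝ) ≤ 3 - s := by linarith
    have hdR : ((1 - 2*p) * p^2) * (Rc p)^(3-s) ≤ 1/4 := by
      by_cases hRle : Rc p ≤ 1
      · have : (Rc p)^(3-s) ≤ 1 := Real.rpow_le_one hR0 hRle h3s
        nlinarith
      · push_neg at hRle
        have h1 : (Rc p)^(3-s) ≤ (Rc p)^(1:ℝ) :=
          Real.rpow_le_rpow_of_exponent_le hRle.le (by linarith)
        rw [Real.rpow_one] at h1
        have h2 := dR_le hp0 hp1
        nlinarith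
    calc ((1 - 2*p) * p^2)^m * (Nrm (Cword p w)⁻¹)^(3-s)
        ≤ ((1 - 2*p) * p^2)^m * (3 * m * (Rc p)^m)^(3-s) := by
          apply mul_le_mul_of_nonneg_left _ (pow_nonneg hdpos.le m)
          exact Real.rpow_le_rpow hNinvpos.le hNinvle h3s
      _ = (3:ℝ)^(3-s) * (m:ℝ)^(3-s) * (((1 - 2*p) * p^2)^m * ((Rc p)^m)^(3-s)) := by
          rw [Real.mul_rpow (by positivity) (by positivity),
            Real.mul_rpow (by norm_num) (by positivity)]
          ring
      _ ≤ 3 * m * (((1 - 2*p) * p^2)^m * ((Rc p)^m)^(3-s)) := by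
          have e1 : (3:ℝ)^(3-s) ≤ 3 := by
            calc (3:ℝ)^(3-s) ≤ (3:ℝ)^(1:ℝ) :=
              Real.rpow_le_rpow_of_exponent_le (by norm_num) (by linarith)
            _ = 3 := Real.rpow_one 3
          have e2 : (m:ℝ)^(3-s) ≤ m := by
            calc (m:ℝ)^(3-s) ≤ (m:ℝ)^(1:ℝ) :=
              Real.rpow_le_rpow_of_exponent_le hm1 (by linarith)
            _ = m := Real.rpow_one _
          have hnn : (0:ℝ) ≤ ((1 - 2*p) * p^2)^m * ((Rc p)^m)^(3-s) := by positivity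
          have e3 : (3:ℝ)^(3-s) * (m:ℝ)^(3-s) ≤ 3 * m :=
            mul_le_mul e1 e2 (Real.rpow_nonneg (by positivity) _) (by norm_num)
          exact mul_le_mul_of_nonneg_right e3 hnn
      _ ≤ 3 * m * ((1:ℝ)/4)^m := by
          apply mul_le_mul_of_nonneg_left _ (by positivity)
          calc ((1 - 2*p) * p^2)^m * ((Rc p)^m)^(3-s)
              = (((1 - 2*p) * p^2) * (Rc p)^(3-s))^m := by
                have hswap : ((Rc p ^ m : ℝ))^(3-s) = ((Rc p)^(3-s))^m := by
                  rw [← Real.rpow_natCast (Rc p) m, ← Real.rpow_mul hR0,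
                    mul_comm ((m:ℕ):ℝ) (3-s), Real.rpow_mul hR0, Real.rpow_natCast]
                rw [hswap, ← mul_pow]
            _ ≤ (1/4:ℝ)^m := pow_le_pow_left₀ (by positivity) hdR m
  · push_neg at hs3
    have heval : svf s (Cword p w) = (((1 - 2*p) * p^2)^m : ℝ)^(s/3) := by
      unfold svf
      rw [if_neg (by linarith), if_neg (by linarith), if_neg (by linarith)]
      have key : sv1 (Cword p w) * sv2 (Cword p w) * sv3 (Cword p w)
          = |(Cword p w).det| := by
        unfold sv2
        field_simp
      rw [key, habsdet]
    rw [heval]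
    have e1 : ((((1 - 2*p) * p^2)^m : ℝ))^(s/3) ≤ ((1 - 2*p) * p^2)^m := by
      have hdm1 : (((1 - 2*p) * p^2):ℝ)^m ≤ 1 := by
        calc ((1 - 2*p) * p^2)^m ≤ (1/27:ℝ)^m := pow_le_pow_left₀ hdpos.le hd1 m
          _ ≤ 1 := pow_le_one₀ (by norm_num) (by norm_num)
      calc ((((1 - 2*p) * p^2)^m : ℝ))^(s/3) ≤ ((((1 - 2*p) * p^2)^m : ℝ))^(1:ℝ) := by
            apply Real.rpow_le_rpow_of_exponent_ge (pow_pos hdpos m) hdm1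
            linarith
        _ = ((1 - 2*p) * p^2)^m := Real.rpow_one _
    calc ((((1 - 2*p) * p^2)^m : ℝ))^(s/3) ≤ ((1 - 2*p) * p^2)^m := e1
      _ ≤ (1/4:ℝ)^m := by
          apply pow_le_pow_left₀ hdpos.le
          linarith
      _ ≤ 3 * m * (1/4:ℝ)^m := by
          have h1 : (1:ℝ) ≤ 3 * m := by nlinarith
          nlinarith [pow_pos (by norm_num : (0:ℝ) < 1/4) m]

lemma svf_nonneg (s : ℝ) (A : Mat3) : 0 ≤ svf s A := by
  have h1 : 0 ≤ sv1 A := norm_nonneg _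
  have h3 : 0 ≤ sv3 A := inv_nonneg.mpr (norm_nonneg _)
  have h2 : 0 ≤ sv2 A := div_nonneg (abs_nonneg _) (mul_nonneg h1 h3)
  unfold svf
  split_ifs <;> positivity

end SvfAux

/-- Theorem (the series converges for all `s > 2`, hence `s₀ ≤ 2`). -/
theorem series_summable_of_two_lt (p : ℝ) (hp0 : 0 < p) (hp1 : p < 1/2) :
    (∀ s : ℝ, 2 < s → seriesSummable p s) ∧ s0 p ≤ 2 := by
  have hsum : ∀ s : ℝ, 2 < s → seriesSummable p s := by
    intro s hs
    unfold seriesSummable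
    have hnn : ∀ x : Σ _n : ℕ, (Fin (_n+1) → Fin 3), 0 ≤ svf s (Cword p x.2) :=
      fun x => SvfAux.svf_nonneg _ _
    rw [summable_sigma_of_nonneg hnn]
    constructor
    · intro n
      exact Summable.of_finite
    · have hmaj : Summable (fun n : ℕ => 3 * (((n+1:ℕ)):ℝ) * ((3:ℝ)/4)^(n+1)) := by
        have h0 : Summable (fun k : ℕ => (k:ℝ) * (3/4:ℝ)^k) := by
          have := summable_pow_mul_geometric_of_norm_lt_one (R := ℝ) 1
            (r := 3/4) (by rw [Real.norm_eq_abs]; rw [abs_of_pos] <;> norm_num)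
          simpa using this
        have h1 : Summable (fun n : ℕ => ((n+1:ℕ):ℝ) * (3/4:ℝ)^(n+1)) :=
          (summable_nat_add_iff 1).mpr h0
        have h2 := h1.mul_left 3
        convert h2 using 2 with n
        · rfl
        ring
      apply Summable.of_nonneg_of_le
        (fun n => tsum_nonneg (fun w => hnn ⟨n, w⟩)) _ hmaj
      intro n
      rw [tsum_fintype]
      have hcard : (Fintype.card (Fin (n+1) → Fin 3)) = 3^(n+1) := by
        simp [Fintype.card_fun]
      calc ∑ w : Fin (n+1) → Fin 3, svf s (Cword p w)
          ≤ ∑ _w : Fin (n+1) → Fin 3, 3 * ((n+1:ℕ):ℝ) * ((1:ℝ)/4)^(n+1) :=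
            Finset.sum_le_sum
              (fun w _ => SvfAux.word_bound hp0 hp1 hs (Nat.le_add_left 1 n) w)
        _ = (Fintype.card (Fin (n+1) → Fin 3) : ℝ)
              * (3 * ((n+1:ℕ):ℝ) * ((1:ℝ)/4)^(n+1)) := by
            rw [Finset.sum_const, nsmul_eq_mul, Finset.card_univ]
        _ = 3 * ((n+1:ℕ):ℝ) * ((3:ℝ)/4)^(n+1) := by
            rw [hcard]
            have h34 : ((3:ℝ)/4)^(n+1) = (3:ℝ)^(n+1) * ((1:ℝ)/4)^(n+1) := by
              rw [← mul_pow]; norm_num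
            rw [h34]
            push_cast
            ring
  refine ⟨hsum, ?_⟩
  have hb : BddBelow {s : ℝ | 0 < s ∧ seriesSummable p s} :=
    ⟨0, fun x hx => hx.1.le⟩
  have hmem : ∀ t : ℝ, 2 < t → s0 p ≤ t := fun t ht =>
    csInf_le hb ⟨by linarith, hsum t ht⟩
  by_contra h
  push_neg at h
  have := hmem ((2 + s0 p)/2) (by linarith)
  linarith
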